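/- Let T be a finite tree with more than 2 vertices and exactly k internal (non-leaf) vertices, each of degree greater than 2. Then T can be expressed as an iterated gluing of k star trees, where the gluing of two trees T1 and T2 along leaf-incident edges e1 = {v1,k1} (k1 a leaf of T1) and e2 = {v2,k2} (k2 a leaf of T2) is the tree obtained by deleting the leaves k1 and k2 and adding the edge {v1,v2}. -/

import Mathlib

open Classical SimpleGraph

noncomputable section

/-- A leaf of a graph: a vertex with exactly one neighbor. -/
def IsLeaf {V : Type*} (G : SimpleGraph V) (v : V) : Prop := ∃! w, G.Adj v w

/-- A star tree: a tree with exactly one internal (non-leaf) vertex. -/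
def IsStar {V : Type*} (G : SimpleGraph V) : Prop := G.IsTree ∧ ∃! u, ¬ IsLeaf G u

/-- Vertex set of the gluing of two graphs along the leaves `k1`, `k2`:
the disjoint union with the two leaves removed. -/
def GlueV (V1 V2 : Type) (k1 : V1) (k2 : V2) : Type :=
  {x : V1 ⊕ V2 // x ≠ Sum.inl k1 ∧ x ≠ Sum.inr k2}

def glueAdj {V1 V2 : Type} (G1 : SimpleGraph V1) (G2 : SimpleGraph V2) (v1 : V1) (v2 : V2) :
    V1 ⊕ V2 → V1 ⊕ V2 → Prop
  | Sum.inl x, Sum.inl y => G1.Adj x y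
  | Sum.inr x, Sum.inr y => G2.Adj x y
  | Sum.inl x, Sum.inr y => x = v1 ∧ y = v2
  | Sum.inr x, Sum.inl y => x = v2 ∧ y = v1

/-- The gluing `T1 *_{e1,e2} T2` along the leaf edges `e1 = {v1,k1}`, `e2 = {v2,k2}`:
delete the leaves `k1`, `k2` and add the edge `{v1,v2}`. -/
def glueGraph {V1 V2 : Type} (G1 : SimpleGraph V1) (G2 : SimpleGraph V2)
    (v1 k1 : V1) (v2 k2 : V2) : SimpleGraph (GlueV V1 V2 k1 k2) where
  Adj a b := glueAdj G1 G2 v1 v2 a.1 b.1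
  symm := by
    constructor
    rintro ⟨(x|x), _⟩ ⟨(y|y), _⟩ h <;> simp only [glueAdj] at * <;>
      first | exact h.symm | tauto
  loopless := by
    constructor
    rintro ⟨(x|x), _⟩ h <;> simp only [glueAdj] at h <;>
      first | exact G1.irrefl h | exact G2.irrefl h

/-- `StarGluing G L` : `G` is an iterated gluing of star trees, one star with `n` leaves
for each entry `n` of the list `L`, the gluings being performed along leaf-incident edges. -/
inductive StarGluing : {V : Type} → SimpleGraph V → List ℕ → Prop
  | star {V : Type} (G : SimpleGraph V) (n : ℕ) (hstar : IsStar G)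
      (hn : Set.ncard {v | IsLeaf G v} = n) : StarGluing G [n]
  | glue {V1 V2 : Type} (G1 : SimpleGraph V1) (G2 : SimpleGraph V2)
      (v1 k1 : V1) (v2 k2 : V2) (L1 L2 : List ℕ)
      (h1 : StarGluing G1 L1) (h2 : StarGluing G2 L2)
      (hk1 : IsLeaf G1 k1) (hk2 : IsLeaf G2 k2)
      (hv1 : G1.Adj k1 v1) (hv2 : G2.Adj k2 v2) :
      StarGluing (glueGraph G1 G2 v1 k1 v2 k2) (L1 ++ L2)

/-! ### Auxiliary lemmas -/

lemma isLeaf_iff_ncard {V : Type*} [Finite V] (G : SimpleGraph V) (v : V) :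
    IsLeaf G v ↔ (G.neighborSet v).ncard = 1 := by
  rw [Set.ncard_eq_one]
  constructor
  · rintro ⟨w, hw, hu⟩
    exact ⟨w, Set.eq_singleton_iff_unique_mem.2 ⟨hw, fun x hx => hu x hx⟩⟩
  · rintro ⟨a, ha⟩
    refine ⟨a, ?_, fun y hy => ?_⟩
    · have : a ∈ G.neighborSet v := ha ▸ rfl
      exact this
    · have : y ∈ G.neighborSet v := hy
      rw [ha] at this; exact this

lemma isLeaf_map {V W : Type*} {G : SimpleGraph V} {H : SimpleGraph W} (φ : G ≃g H) (v : V) :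
    IsLeaf G v ↔ IsLeaf H (φ v) := by
  constructor
  · rintro ⟨w, hw, hu⟩
    refine ⟨φ w, φ.map_adj_iff.2 hw, fun y hy => ?_⟩
    have : G.Adj v (φ.symm y) := by
      rw [← φ.map_adj_iff]; simpa using hy
    have := hu _ this
    rw [← this]; simp
  · rintro ⟨w, hw, hu⟩
    refine ⟨φ.symm w, ?_, fun y hy => ?_⟩
    · show G.Adj v (φ.symm w)
      rw [← φ.map_adj_iff]; simpa using hw
    · have : H.Adj (φ v) (φ y) := φ.map_adj_iff.2 hy
      have := hu _ this
      simp [← this]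

lemma neighborSet_map_ncard {V W : Type*} {G : SimpleGraph V} {H : SimpleGraph W} (φ : G ≃g H)
    (v : V) : (H.neighborSet (φ v)).ncard = (G.neighborSet v).ncard := by
  have h : H.neighborSet (φ v) = φ '' (G.neighborSet v) := by
    ext y
    simp only [mem_neighborSet, Set.mem_image]
    constructor
    · intro hy
      refine ⟨φ.symm y, ?_, by simp⟩
      rw [← φ.map_adj_iff]; simpa using hy
    · rintro ⟨x, hx, rfl⟩; exact φ.map_adj_iff.2 hx
  rw [h]; exact Set.ncard_image_of_injective _ (RelIso.injective φ)

lemma internal_set_map {V W : Type*} {G : SimpleGraph V} {H : SimpleGraph W} (φ : G ≃g H) :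
    {w | ¬ IsLeaf H w} = φ '' {v | ¬ IsLeaf G v} := by
  ext w
  simp only [Set.mem_setOf_eq, Set.mem_image]
  constructor
  · intro hw
    exact ⟨φ.symm w, by rw [isLeaf_map φ]; simpa, by simp⟩
  · rintro ⟨v, hv, rfl⟩
    rw [← isLeaf_map φ]; exact hv

lemma isAcyclic_map {V W : Type*} {G : SimpleGraph V} {H : SimpleGraph W} (φ : G ≃g H)
    (hG : G.IsAcyclic) : H.IsAcyclic := by
  intro v c hc
  have := hc.map (f := φ.symm.toHom) φ.symm.toEquiv.injective
  exact hG _ this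

lemma isTree_map {V W : Type*} {G : SimpleGraph V} {H : SimpleGraph W} (φ : G ≃g H)
    (hG : G.IsTree) : H.IsTree :=
  ⟨φ.connected_iff.1 hG.1, isAcyclic_map φ hG.2⟩

lemma mem_of_walk_closed {V : Type*} {G : SimpleGraph V} {s : Set V}
    (hcl : ∀ x y, x ∈ s → G.Adj x y → y ∈ s) {a b : V} (p : G.Walk a b) (ha : a ∈ s) :
    b ∈ s := by
  induction p with
  | nil => exact ha
  | cons h q ih => exact ih (hcl _ _ ha h)

lemma reachable_induce_of_walk {V : Type*} {G G' : SimpleGraph V} (hle : G' ≤ G) {s : Set V}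
    {a b : V} (p : G'.Walk a b) (hsup : ∀ x ∈ p.support, x ∈ s) :
    (G.induce s).Reachable ⟨a, hsup a p.start_mem_support⟩ ⟨b, hsup b p.end_mem_support⟩ := by
  induction p with
  | nil => rfl
  | @cons u x w h q ih =>
    have hu : u ∈ s := hsup u (by simp)
    have hx : x ∈ s := hsup x (by simp)
    have hadj : (G.induce s).Adj ⟨u, hu⟩ ⟨x, hx⟩ := hle h
    exact hadj.reachable.trans (ih (fun y hy => hsup y (by simp [hy])))

lemma isAcyclic_induce {V : Type*} {G : SimpleGraph V} (hG : G.IsAcyclic) (s : Set V) :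
    (G.induce s).IsAcyclic := by
  intro v c hc
  let hhom : G.induce s →g G := ⟨Subtype.val, fun h => h⟩
  have hinj : Function.Injective hhom := fun x y h => Subtype.val_injective h
  exact hG _ (hc.map (f := hhom) hinj)

lemma reachable_of_mem_support {V : Type*} {G : SimpleGraph V} {a b : V} (p : G.Walk a b)
    {x : V} (hx : x ∈ p.support) : G.Reachable a x :=
  ⟨p.takeUntil x hx⟩

lemma induce_neighborSet_ncard {V : Type*} (G : SimpleGraph V) (s : Set V) (x : V) (hx : x ∈ s)
    (hnb : ∀ y, G.Adj x y → y ∈ s) :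
    ((G.induce s).neighborSet ⟨x, hx⟩).ncard = (G.neighborSet x).ncard := by
  have himg : Subtype.val '' ((G.induce s).neighborSet ⟨x, hx⟩) = G.neighborSet x := by
    ext y
    simp only [Set.mem_image, mem_neighborSet]
    constructor
    · rintro ⟨⟨z, hz⟩, hadj, rfl⟩
      exact hadj
    · intro hy
      exact ⟨⟨y, hnb y hy⟩, hy, rfl⟩
  rw [← himg, Set.ncard_image_of_injective _ Subtype.val_injective]

lemma induce_isLeaf_iff {V : Type*} [Finite V] (G : SimpleGraph V) (s : Set V) (x : V)
    (hx : x ∈ s) (hnb : ∀ y, G.Adj x y → y ∈ s) :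
    IsLeaf (G.induce s) ⟨x, hx⟩ ↔ IsLeaf G x := by
  rw [isLeaf_iff_ncard, isLeaf_iff_ncard, induce_neighborSet_ncard G s x hx hnb]

lemma isLeaf_of_neighborSet_singleton {V : Type*} {G : SimpleGraph V} {x z : V}
    (h : G.neighborSet x = {z}) : IsLeaf G x := by
  refine ⟨z, ?_, fun y hy => ?_⟩
  · have : z ∈ G.neighborSet x := h ▸ rfl
    exact this
  · have : y ∈ G.neighborSet x := hy
    rw [h] at this; exact this

lemma ncard_neighborSet_eq_degree {V : Type*} [Fintype V] (G : SimpleGraph V) (v : V) :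
    (G.neighborSet v).ncard = G.degree v := by
  rw [Set.ncard_eq_toFinset_card', ← neighborFinset_def]; rfl

lemma exists_internal {V : Type*} [Fintype V] (G : SimpleGraph V) (hG : G.IsTree)
    (hcard : 2 < Fintype.card V) : ∃ v, ¬ IsLeaf G v := by
  by_contra h
  push_neg at h
  have hdeg : ∀ v, G.degree v = 1 := fun v => by
    rw [← ncard_neighborSet_eq_degree, ← isLeaf_iff_ncard]; exact h v
  have h1 : ∑ v, G.degree v = Fintype.card V := by simp [hdeg]
  have h2 := G.sum_degrees_eq_twice_card_edges
  have h3 := hG.card_edgeFinset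
  omega

lemma exists_almost_leaf {V : Type*} [Fintype V] (G : SimpleGraph V) (hG : G.IsTree)
    (hcard : 2 < Fintype.card V) :
    ∃ v, ¬ IsLeaf G v ∧ ∀ u1 u2, G.Adj v u1 → G.Adj v u2 →
      ¬ IsLeaf G u1 → ¬ IsLeaf G u2 → u1 = u2 := by
  obtain ⟨r, hr⟩ := exists_internal G hG hcard
  have hfin : ({v | ¬ IsLeaf G v}).Finite := Set.toFinite _
  obtain ⟨v, hv, hmax⟩ := Set.exists_max_image {v | ¬ IsLeaf G v} (G.dist r) hfin ⟨r, hr⟩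
  refine ⟨v, hv, fun u1 u2 ha1 ha2 hi1 hi2 => ?_⟩
  have key : ∀ u, G.Adj v u → ¬ IsLeaf G u →
      ∃ p : G.Walk u r, p.IsPath ∧ v ∉ p.support := by
    intro u hadj hint
    obtain ⟨p, hp, hlen⟩ := hG.isConnected.exists_path_of_dist u r
    refine ⟨p, hp, fun hvs => ?_⟩
    have h1 : G.dist u v ≤ (p.takeUntil v hvs).length := dist_le _
    have h2 : G.dist v r ≤ (p.dropUntil v hvs).length := dist_le _
    have h3 : (p.takeUntil v hvs).length + (p.dropUntil v hvs).length = p.length := by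
      have := congrArg Walk.length (p.take_spec hvs)
      rwa [Walk.length_append] at this
    have h4 : 0 < G.dist u v :=
      hG.isConnected.pos_dist_of_ne (fun h => G.ne_of_adj hadj h.symm)
    have h5 : G.dist r u ≤ G.dist r v := hmax u hint
    rw [show G.dist r u = G.dist u r from SimpleGraph.dist_comm,
      show G.dist r v = G.dist v r from SimpleGraph.dist_comm] at h5
    rw [hlen] at h3
    omega
  obtain ⟨p1, hp1, hv1⟩ := key u1 ha1 hi1
  obtain ⟨p2, hp2, hv2⟩ := key u2 ha2 hi2
  have hq1 : (Walk.cons ha1 p1).IsPath := (Walk.cons_isPath_iff _ _).2 ⟨hp1, hv1⟩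
  have hq2 : (Walk.cons ha2 p2).IsPath := (Walk.cons_isPath_iff _ _).2 ⟨hp2, hv2⟩
  have huniq := hG.existsUnique_path v r
  have := huniq.unique hq1 hq2
  have hsup := congrArg Walk.support this
  rw [Walk.support_cons, Walk.support_cons, Walk.support_eq_cons p1,
    Walk.support_eq_cons p2] at hsup
  simp at hsup
  have h := congrArg List.head? hsup
  rw [Walk.support_eq_cons p1, Walk.support_eq_cons p2] at h
  simp only [List.head?_cons, Option.some.injEq] at h
  exact h

lemma internal_unique_of_all_nbrs_leaves {V : Type*} {G : SimpleGraph V} (hG : G.IsTree)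
    (v : V) (hnb : ∀ x, G.Adj v x → IsLeaf G x) : ∀ w, ¬ IsLeaf G w → w = v := by
  intro w hw
  by_contra hne
  obtain ⟨p, hp⟩ := (hG.existsUnique_path v w).exists
  cases p with
  | nil => exact hne rfl
  | @cons _ x _ h q =>
    cases q with
    | nil => exact hw (hnb _ h)
    | @cons _ y _ h2 q2 =>
      have hxleaf := hnb _ h
      rw [Walk.cons_isPath_iff] at hp
      have hyne : v ≠ y := by
        intro hvy
        exact hp.2
          (by rw [Walk.support_cons, hvy]; exact List.mem_cons_of_mem _ q2.start_mem_support)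
      obtain ⟨z, hz, hzu⟩ := hxleaf
      have e1 : v = z := hzu v h.symm
      have e2 : y = z := hzu y h2
      exact hyne (e1.trans e2.symm)

lemma reachable_endpoint_of_delete {V : Type*} {G : SimpleGraph V} (u v : V) {w t : V}
    (p : G.Walk w t)
    (ht : (G \ fromEdgeSet {s(u,v)}).Reachable t u ∨ (G \ fromEdgeSet {s(u,v)}).Reachable t v) :
    (G \ fromEdgeSet {s(u,v)}).Reachable w u ∨ (G \ fromEdgeSet {s(u,v)}).Reachable w v := by
  induction p with
  | nil => exact ht
  | @cons a x _ h q ih =>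
    by_cases he : s(a,x) = s(u,v)
    · rw [Sym2.eq_iff] at he
      rcases he with ⟨rfl, rfl⟩ | ⟨rfl, rfl⟩
      · exact Or.inl (Reachable.refl _)
      · exact Or.inr (Reachable.refl _)
    · have hadj : (G \ fromEdgeSet {s(u,v)}).Adj a x := by
        rw [sdiff_adj, fromEdgeSet_adj]
        exact ⟨h, fun hc => he hc.1⟩
      rcases ih ht with h' | h'
      · exact Or.inl (hadj.reachable.trans h')
      · exact Or.inr (hadj.reachable.trans h')

lemma two_lt_card_of_internal {V : Type*} [Fintype V] (G : SimpleGraph V) (w : V)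
    (h : 2 < (G.neighborSet w).ncard) : 2 < Fintype.card V := by
  have h1 : (insert w (G.neighborSet w)).ncard = (G.neighborSet w).ncard + 1 :=
    Set.ncard_insert_of_notMem (fun hc => G.irrefl hc) (Set.toFinite _)
  have h2 : (insert w (G.neighborSet w)).ncard ≤ (Set.univ : Set V).ncard :=
    Set.ncard_le_ncard (Set.subset_univ _) (Set.toFinite _)
  rw [Set.ncard_univ, Nat.card_eq_fintype_card] at h2
  omega

/-! ### Iso constructions -/

def glueIso {V1 V2 W1 W2 : Type} {G1 : SimpleGraph V1} {G2 : SimpleGraph V2}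
    {H1 : SimpleGraph W1} {H2 : SimpleGraph W2} (φ1 : G1 ≃g H1) (φ2 : G2 ≃g H2)
    (v1 k1 : V1) (v2 k2 : V2) :
    glueGraph G1 G2 v1 k1 v2 k2 ≃g glueGraph H1 H2 (φ1 v1) (φ1 k1) (φ2 v2) (φ2 k2) := by
  refine ⟨Equiv.subtypeEquiv (Equiv.sumCongr φ1.toEquiv φ2.toEquiv) ?_, ?_⟩
  · rintro (x|x) <;>
      simp [Equiv.sumCongr, EmbeddingLike.apply_eq_iff_eq]
  · rintro ⟨(x|x), hx⟩ ⟨(y|y), hy⟩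
    · show H1.Adj (φ1 x) (φ1 y) ↔ G1.Adj x y
      exact φ1.map_adj_iff
    · show (φ1 x = φ1 v1 ∧ φ2 y = φ2 v2) ↔ (x = v1 ∧ y = v2)
      simp [EmbeddingLike.apply_eq_iff_eq]
    · show (φ2 x = φ2 v2 ∧ φ1 y = φ1 v1) ↔ (x = v2 ∧ y = v1)
      simp [EmbeddingLike.apply_eq_iff_eq]
    · show H2.Adj (φ2 x) (φ2 y) ↔ G2.Adj x y
      exact φ2.map_adj_iff

def splitIso {V : Type} (G : SimpleGraph V) (A B : Set V) (u v : V)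
    (hu : u ∈ A) (hv : v ∈ B) (hdisj : ∀ x, ¬(x ∈ A ∧ x ∈ B)) (hcov : ∀ x, x ∈ A ∨ x ∈ B)
    (hedge : ∀ x y, x ∈ A → y ∈ B → (G.Adj x y ↔ x = u ∧ y = v)) :
    G ≃g glueGraph (G.induce (A ∪ {v})) (G.induce (B ∪ {u}))
      ⟨u, Set.mem_union_left _ hu⟩ ⟨v, Set.mem_union_right _ (Set.mem_singleton _)⟩ ⟨v, Set.mem_union_left _ hv⟩ ⟨u, Set.mem_union_right _ (Set.mem_singleton _)⟩ := by
  have hvA : v ∉ A := fun h => hdisj v ⟨h, hv⟩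
  have huB : u ∉ B := fun h => hdisj u ⟨hu, h⟩
  refine ⟨⟨fun x => if hx : x ∈ A then @id (GlueV _ _ _ _) ⟨Sum.inl ⟨x, Set.mem_union_left _ hx⟩, ?_, Sum.inl_ne_inr⟩
      else @id (GlueV _ _ _ _) ⟨Sum.inr ⟨x, Set.mem_union_left _ ((hcov x).resolve_left hx)⟩, Sum.inr_ne_inl, ?_⟩,
    fun w => Sum.elim Subtype.val Subtype.val w.1, ?_, ?_⟩, ?_⟩
  · simp only [ne_eq, Sum.inl.injEq, Subtype.mk.injEq]
    rintro rfl; exact hvA hx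
  · simp only [ne_eq, Sum.inr.injEq, Subtype.mk.injEq]
    rintro rfl; exact hx hu
  · intro x
    by_cases hx : x ∈ A <;> simp [hx] <;> rfl
  · rintro ⟨(⟨x, hx⟩|⟨x, hx⟩), hne1, hne2⟩
    · have hxv : x ≠ v := by
        simp only [ne_eq, Sum.inl.injEq, Subtype.mk.injEq] at hne1; exact hne1
      have hxA : x ∈ A := hx.resolve_right hxv
      simp [hxA]
      rfl
    · have hxu : x ≠ u := by
        simp only [ne_eq, Sum.inr.injEq, Subtype.mk.injEq] at hne2; exact hne2
      have hxB : x ∈ B := hx.resolve_right hxu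
      have hxA : x ∉ A := fun h => hdisj x ⟨h, hxB⟩
      simp [hxA]
      rfl
  · intro x y
    by_cases hx : x ∈ A <;> by_cases hy : y ∈ A
    · simp only [Equiv.coe_fn_mk, dif_pos hx, dif_pos hy]
      exact Iff.rfl
    · simp only [Equiv.coe_fn_mk, dif_pos hx, dif_neg hy]
      show ((⟨x, Set.mem_union_left _ hx⟩ : ↥(A ∪ {v})) = ⟨u, Set.mem_union_left _ hu⟩ ∧
        (⟨y, Set.mem_union_left _ ((hcov y).resolve_left hy)⟩ : ↥(B ∪ {u})) = ⟨v, Set.mem_union_left _ hv⟩) ↔ G.Adj x y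
      rw [hedge x y hx ((hcov y).resolve_left hy)]
      simp [Subtype.ext_iff]
    · simp only [Equiv.coe_fn_mk, dif_neg hx, dif_pos hy]
      show ((⟨x, Set.mem_union_left _ ((hcov x).resolve_left hx)⟩ : ↥(B ∪ {u})) = ⟨v, Set.mem_union_left _ hv⟩ ∧
        (⟨y, Set.mem_union_left _ hy⟩ : ↥(A ∪ {v})) = ⟨u, Set.mem_union_left _ hu⟩) ↔ G.Adj x y
      rw [adj_comm, hedge y x hy ((hcov x).resolve_left hx)]
      simp [Subtype.ext_iff, and_comm]
    · simp only [Equiv.coe_fn_mk, dif_neg hx, dif_neg hy]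
      exact Iff.rfl

/-! ### Main induction -/

theorem glue_aux : ∀ (N : ℕ) (V : Type) [Fintype V] (G : SimpleGraph V),
    Fintype.card V ≤ N →
    G.IsTree → 2 < Fintype.card V →
    (∀ v, ¬ IsLeaf G v → 2 < (G.neighborSet v).ncard) →
    ∃ (W : Type) (H : SimpleGraph W) (L : List ℕ),
      Nonempty (G ≃g H) ∧ StarGluing H L ∧ L.length = {v | ¬ IsLeaf G v}.ncard := by
  intro N
  induction N with
  | zero => intro V _ G hN hG hcard hdeg; omega
  | succ N ih =>
    intro V _ G hN hG hcard hdeg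
    obtain ⟨v, hv, hone⟩ := exists_almost_leaf G hG hcard
    by_cases hS : ∃ u, G.Adj v u ∧ ¬ IsLeaf G u
    · -- splitting case
      obtain ⟨u, hadj, hu⟩ := hS
      have hne_uv : u ≠ v := fun h => G.ne_of_adj hadj h.symm
      set G' := G \ fromEdgeSet {s(u,v)} with hG'def
      have hsub : G' ≤ G := sdiff_le
      have hbr : ¬ G'.Reachable u v := by
        have := (isAcyclic_iff_forall_adj_isBridge.1 hG.2) (hadj.symm)
        rw [isBridge_iff] at this
        exact this
      set A := {w | G'.Reachable u w} with hAdef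
      set B := {w | G'.Reachable v w} with hBdef
      have huA : u ∈ A := Reachable.refl _
      have hvB : v ∈ B := Reachable.refl _
      have hvA : v ∉ A := fun h => hbr h
      have huB : u ∉ B := fun h => hbr h.symm
      have hdisj : ∀ x, ¬(x ∈ A ∧ x ∈ B) := fun x ⟨hxa, hxb⟩ => hbr (hxa.trans hxb.symm)
      have hcov : ∀ x, x ∈ A ∨ x ∈ B := by
        intro x
        obtain ⟨p⟩ := hG.isConnected x v
        rcases reachable_endpoint_of_delete u v p (Or.inr (Reachable.refl _)) with h | h
        · exact Or.inl h.symm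
        · exact Or.inr h.symm
      -- adjacency-closure facts
      have hGadj' : ∀ x y, G.Adj x y → s(x,y) ≠ s(u,v) → G'.Adj x y := by
        intro x y hxy hne
        rw [hG'def, sdiff_adj, fromEdgeSet_adj]
        exact ⟨hxy, fun hc => hne hc.1⟩
      have closedA : ∀ x y, x ∈ A → G.Adj x y → y = v ∨ y ∈ A := by
        intro x y hx hxy
        by_cases he : s(x,y) = s(u,v)
        · rw [Sym2.eq_iff] at he
          rcases he with ⟨rfl, rfl⟩ | ⟨rfl, rfl⟩
          · exact Or.inl rfl
          · exact absurd hx hvA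
        · exact Or.inr (hx.trans (hGadj' x y hxy he).reachable)
      have closedB : ∀ x y, x ∈ B → G.Adj x y → y = u ∨ y ∈ B := by
        intro x y hx hxy
        by_cases he : s(x,y) = s(u,v)
        · rw [Sym2.eq_iff] at he
          rcases he with ⟨rfl, rfl⟩ | ⟨rfl, rfl⟩
          · exact absurd hx huB
          · exact Or.inl rfl
        · exact Or.inr (hx.trans (hGadj' x y hxy he).reachable)
      have hedge : ∀ x y, x ∈ A → y ∈ B → (G.Adj x y ↔ x = u ∧ y = v) := by
        intro x y hxA hyB
        constructor
        · intro h
          have h1 : y = v ∨ y ∈ A := closedA x y hxA h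
          have hy : y = v := h1.resolve_right (fun hc => hdisj y ⟨hc, hyB⟩)
          subst hy
          have h2 : x = u ∨ x ∈ B := closedB y x hvB h.symm
          exact ⟨h2.resolve_right (fun hc => hdisj x ⟨hxA, hc⟩), rfl⟩
        · rintro ⟨rfl, rfl⟩; exact hadj.symm
      -- all neighbors of v except u are leaves
      have hleafnb : ∀ x, G.Adj v x → x ≠ u → IsLeaf G x := by
        intro x hx hxu
        by_contra hxi
        exact hxu (hone x u hx hadj hxi hu)
      -- description of B
      have hBdesc : ∀ x ∈ B, x = v ∨ (G.Adj v x ∧ x ≠ u) := by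
        intro x hx
        have hcl : ∀ a b, a ∈ {v} ∪ {y | G.Adj v y ∧ y ≠ u} → G'.Adj a b →
            b ∈ ({v} ∪ {y | G.Adj v y ∧ y ≠ u} : Set V) := by
          rintro a b (rfl | ⟨hab, hau⟩) hadj'
          · right
            refine ⟨hsub hadj', fun hc => ?_⟩
            subst hc
            rw [hG'def, sdiff_adj, fromEdgeSet_adj] at hadj'
            exact hadj'.2 ⟨Sym2.eq_swap ▸ rfl, G.ne_of_adj hadj'.1⟩
          · obtain ⟨z, hz, hzu⟩ := hleafnb a hab hau
            have hva : a ≠ b := (hsub hadj').ne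
            have e1 : v = z := hzu v hab.symm
            have e2 : b = z := hzu b (hsub hadj')
            left
            rw [e2, ← e1]
            exact rfl
        obtain ⟨p⟩ := hx
        have := mem_of_walk_closed hcl p (Or.inl rfl)
        rcases this with h | h
        · exact Or.inl h
        · exact Or.inr h
      -- every vertex of B other than v is a leaf of G
      have hBleaf : ∀ x ∈ B, x ≠ v → IsLeaf G x := by
        intro x hx hxv
        rcases hBdesc x hx with h | ⟨h1, h2⟩
        · exact absurd h hxv
        · exact hleafnb x h1 h2
      -- neighbors of v other than u are in B
      have hnbB : ∀ y, G.Adj v y → y ≠ u → y ∈ B := by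
        intro y hy hyu
        have : G'.Adj v y := hGadj' v y hy (by
          intro hc
          rw [Sym2.eq_iff] at hc
          rcases hc with ⟨h1, h2⟩ | ⟨h1, h2⟩
          · exact hne_uv h1.symm
          · exact hyu h2)
        exact this.reachable
      set s1 : Set V := A ∪ {v} with hs1def
      set s2 : Set V := B ∪ {u} with hs2def
      set T1 := G.induce s1 with hT1def
      set T2 := G.induce s2 with hT2def
      have hus1 : u ∈ s1 := Or.inl huA
      have hvs1 : v ∈ s1 := Or.inr rfl
      have hvs2 : v ∈ s2 := Or.inl hvB
      have hus2 : u ∈ s2 := Or.inr rfl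
      -- closure of s1 and s2
      have hcl1 : ∀ x, x ∈ A → ∀ y, G.Adj x y → y ∈ s1 := by
        intro x hx y hxy
        rcases closedA x y hx hxy with rfl | h
        · exact hvs1
        · exact Or.inl h
      have hcl2 : ∀ x, x ∈ B → ∀ y, G.Adj x y → y ∈ s2 := by
        intro x hx y hxy
        rcases closedB x y hx hxy with rfl | h
        · exact hus2
        · exact Or.inl h
      -- neighbor set of v in T1 is {u}
      have hT1v : T1.neighborSet ⟨v, hvs1⟩ = {⟨u, hus1⟩} := by
        ext ⟨y, hy⟩
        simp only [mem_neighborSet, Set.mem_singleton_iff, Subtype.mk.injEq]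
        constructor
        · intro h
          have h' : G.Adj v y := h
          rcases hy with hyA | hyv
          · have := (hedge y v hyA hvB).1 h'.symm
            exact this.1
          · exact absurd (show y = v from hyv) (fun hc => G.irrefl (hc ▸ h'))
        · rintro rfl
          exact hadj
      -- neighbor set of u in T2 is {v}
      have hT2u : T2.neighborSet ⟨u, hus2⟩ = {⟨v, hvs2⟩} := by
        ext ⟨y, hy⟩
        simp only [mem_neighborSet, Set.mem_singleton_iff, Subtype.mk.injEq]
        constructor
        · intro h
          have h' : G.Adj u y := h
          rcases hy with hyB | hyu
          · exact ((hedge u y huA hyB).1 h').2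
          · exact absurd (show y = u from hyu) (fun hc => G.irrefl (hc ▸ h'))
        · rintro rfl
          exact hadj.symm
      have hT1vleaf : IsLeaf T1 ⟨v, hvs1⟩ := isLeaf_of_neighborSet_singleton hT1v
      have hT2uleaf : IsLeaf T2 ⟨u, hus2⟩ := isLeaf_of_neighborSet_singleton hT2u
      -- T1 is a tree
      haveI : Fintype ↥s1 := Fintype.ofFinite _
      haveI : Fintype ↥s2 := Fintype.ofFinite _
      have hT1tree : T1.IsTree := by
        refine ⟨?_, isAcyclic_induce hG.2 s1⟩
        rw [connected_iff_exists_forall_reachable]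
        refine ⟨⟨u, hus1⟩, ?_⟩
        rintro ⟨z, hz⟩
        refine Reachable.symm ?_
        rcases hz with hzA | hzv
        · obtain ⟨p⟩ := (hzA : G'.Reachable u z)
          have hsup : ∀ x ∈ p.reverse.support, x ∈ s1 := by
            intro x hxs
            exact Or.inl (Reachable.trans ⟨p⟩ (reachable_of_mem_support p.reverse hxs))
          exact (reachable_induce_of_walk hsub p.reverse hsup)
        · have : z = v := hzv
          subst this
          exact Adj.reachable (by exact hadj : T1.Adj ⟨z, hvs1⟩ ⟨u, hus1⟩)
      have hT2tree : T2.IsTree := by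
        refine ⟨?_, isAcyclic_induce hG.2 s2⟩
        rw [connected_iff_exists_forall_reachable]
        refine ⟨⟨v, hvs2⟩, ?_⟩
        rintro ⟨z, hz⟩
        refine Reachable.symm ?_
        rcases hz with hzB | hzu
        · obtain ⟨p⟩ := (hzB : G'.Reachable v z)
          have hsup : ∀ x ∈ p.reverse.support, x ∈ s2 := by
            intro x hxs
            exact Or.inl (Reachable.trans ⟨p⟩ (reachable_of_mem_support p.reverse hxs))
          exact (reachable_induce_of_walk hsub p.reverse hsup)
        · have : z = u := hzu
          subst this
          exact Adj.reachable (by exact hadj.symm : T2.Adj ⟨z, hus2⟩ ⟨v, hvs2⟩)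
      -- degree facts
      have hdeg_v : 2 < (G.neighborSet v).ncard := hdeg v hv
      have hdeg_u : 2 < (G.neighborSet u).ncard := hdeg u hu
      -- v's neighbors are all in s2
      have hvnb2 : ∀ y, G.Adj v y → y ∈ s2 := by
        intro y hy
        by_cases hyu : y = u
        · subst hyu; exact hus2
        · exact Or.inl (hnbB y hy hyu)
      have hT2v_ncard : (T2.neighborSet ⟨v, hvs2⟩).ncard = (G.neighborSet v).ncard :=
        induce_neighborSet_ncard G s2 v hvs2 hvnb2
      have hT2vint : ¬ IsLeaf T2 ⟨v, hvs2⟩ := by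
        rw [isLeaf_iff_ncard, hT2v_ncard]
        omega
      -- leaves of T2
      have hT2internal : ∀ w : ↥s2, ¬ IsLeaf T2 w → w = ⟨v, hvs2⟩ := by
        rintro ⟨x, hx⟩ hw
        by_contra hne
        have hxv : x ≠ v := fun hc => hne (Subtype.ext hc)
        rcases hx with hxB | hxu
        · have hxleaf : IsLeaf G x := hBleaf x hxB hxv
          have hxnb : ∀ y, G.Adj x y → y ∈ s2 := hcl2 x hxB
          rw [induce_isLeaf_iff G s2 x (Or.inl hxB) hxnb] at hw
          exact hw hxleaf
        · have : x = u := hxu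
          subst this
          exact hw hT2uleaf
      have hT2star : IsStar T2 := ⟨hT2tree, ⟨v, hvs2⟩, hT2vint, hT2internal⟩
      -- internal vertices of T1 : image is exactly (internal G) \ {v}
      have hIA : ∀ x, ¬ IsLeaf G x → x ≠ v → x ∈ A := by
        intro x hx hxv
        rcases hcov x with h | h
        · exact h
        · exact absurd (hBleaf x h hxv) hx
      have hT1int_iff : ∀ (x : V) (hx : x ∈ A),
          (¬ IsLeaf T1 ⟨x, Or.inl hx⟩ ↔ ¬ IsLeaf G x) := by
        intro x hx
        rw [induce_isLeaf_iff G s1 x (Or.inl hx) (hcl1 x hx)]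
      have hT1img : Subtype.val '' {w : ↥s1 | ¬ IsLeaf T1 w} = {x | ¬ IsLeaf G x} \ {v} := by
        ext x
        simp only [Set.mem_image, Set.mem_setOf_eq, Set.mem_diff, Set.mem_singleton_iff]
        constructor
        · rintro ⟨⟨y, hy⟩, hw, rfl⟩
          rcases hy with hyA | hyv
          · exact ⟨((hT1int_iff y hyA).1 hw), fun hc => hvA (hc ▸ hyA)⟩
          · have : y = v := hyv
            subst this
            exact absurd hT1vleaf hw
        · rintro ⟨hint, hxv⟩
          have hxA : x ∈ A := hIA x hint hxv
          exact ⟨⟨x, Or.inl hxA⟩, (hT1int_iff x hxA).2 hint, rfl⟩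
      have hT1int_ncard : {w : ↥s1 | ¬ IsLeaf T1 w}.ncard = {x | ¬ IsLeaf G x}.ncard - 1 := by
        rw [← Set.ncard_image_of_injective _ Subtype.val_injective, hT1img,
          Set.ncard_diff_singleton_of_mem (s := {x | ¬ IsLeaf G x}) (a := v) hv]
      -- hypotheses for recursion on T1
      have hT1deg : ∀ w, ¬ IsLeaf T1 w → 2 < (T1.neighborSet w).ncard := by
        rintro ⟨x, hx⟩ hw
        have hxv : x ≠ v := by
          rintro rfl
          exact hw (by
            have : (⟨x, hx⟩ : ↥s1) = ⟨x, hvs1⟩ := rfl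
            rw [this]; exact hT1vleaf)
        have hxA : x ∈ A := hx.resolve_right hxv
        have : ¬ IsLeaf G x := by
          rw [← hT1int_iff x hxA]
          convert hw
        rw [show (⟨x, hx⟩ : ↥s1) = ⟨x, Or.inl hxA⟩ from rfl,
          induce_neighborSet_ncard G s1 x (Or.inl hxA) (hcl1 x hxA)]
        exact hdeg x this
      have hT1uint : ¬ IsLeaf T1 ⟨u, hus1⟩ := by
        rw [show (⟨u, hus1⟩ : ↥s1) = ⟨u, Or.inl huA⟩ from rfl, hT1int_iff u huA]
        exact hu
      have hT1card : 2 < Fintype.card ↥s1 :=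
        two_lt_card_of_internal T1 ⟨u, hus1⟩ (hT1deg _ hT1uint)
      -- card decreases
      have hcard1 : Fintype.card ↥s1 ≤ N := by
        obtain ⟨x, hxnb, hxu⟩ : ∃ x, G.Adj v x ∧ x ≠ u := by
          by_contra hc
          push_neg at hc
          have : G.neighborSet v ⊆ {u} := fun y hy => hc y hy
          have := Set.ncard_le_ncard this (Set.toFinite _)
          rw [Set.ncard_singleton] at this
          omega
        have hxs1 : x ∉ s1 := by
          rintro (hxA | hxv)
          · exact hdisj x ⟨hxA, hnbB x hxnb hxu⟩
          · exact G.irrefl ((show x = v from hxv) ▸ hxnb)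
        have hlt : Fintype.card ↥s1 < Fintype.card V := by
          rw [← Nat.card_eq_fintype_card, ← Nat.card_eq_fintype_card,
            Nat.card_coe_set_eq, ← Set.ncard_univ]
          exact Set.ncard_lt_ncard (Set.ssubset_iff_of_subset (Set.subset_univ _) |>.2
            ⟨x, trivial, hxs1⟩) (Set.toFinite _)
        omega
      obtain ⟨W1, H1, L1, ⟨φ1⟩, hSG1, hlen1⟩ :=
        ih ↥s1 T1 hcard1 hT1tree hT1card hT1deg
      -- star gluing for T2
      have hstar2 : StarGluing T2 [{w : ↥s2 | IsLeaf T2 w}.ncard] :=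
        StarGluing.star T2 _ hT2star rfl
      -- assemble the glued graph
      have hk1 : IsLeaf H1 (φ1 ⟨v, hvs1⟩) := (isLeaf_map φ1 _).1 hT1vleaf
      have hv1 : H1.Adj (φ1 ⟨v, hvs1⟩) (φ1 ⟨u, hus1⟩) :=
        φ1.map_adj_iff.2 (by exact hadj)
      have hv2 : T2.Adj ⟨u, hus2⟩ ⟨v, hvs2⟩ := by exact hadj.symm
      have hglue := StarGluing.glue H1 T2 (φ1 ⟨u, hus1⟩) (φ1 ⟨v, hvs1⟩)
        ⟨v, hvs2⟩ ⟨u, hus2⟩ L1 _ hSG1 hstar2 hk1 hT2uleaf hv1 hv2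
      -- isomorphism
      have ψ := splitIso G A B u v huA hvB hdisj hcov hedge
      have χ := glueIso φ1 (Iso.refl : T2 ≃g T2) ⟨u, hus1⟩ ⟨v, hvs1⟩ ⟨v, hvs2⟩ ⟨u, hus2⟩
      refine ⟨_, _, _, ⟨ψ.trans χ⟩, hglue, ?_⟩
      rw [List.length_append, hlen1]
      simp only [List.length_singleton]
      have hpos : 0 < {x | ¬ IsLeaf G x}.ncard :=
        (Set.ncard_pos (Set.toFinite _)).2 ⟨v, hv⟩
      omega
    · -- star case
      push_neg at hS
      have hIv : ∀ w, ¬ IsLeaf G w → w = v :=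
        internal_unique_of_all_nbrs_leaves hG v (fun x hx => hS x hx)
      have hIeq : {w | ¬ IsLeaf G w} = {v} := Set.eq_singleton_iff_unique_mem.2 ⟨hv, hIv⟩
      refine ⟨V, G, [{w | IsLeaf G w}.ncard], ⟨(Iso.refl : G ≃g G)⟩,
        StarGluing.star G _ ⟨hG, v, hv, hIv⟩ rfl, ?_⟩
      rw [hIeq, Set.ncard_singleton, List.length_singleton]

/-- A finite tree with more than 2 vertices, having exactly `k` internal
vertices each of degree `> 2`, can be expressed (up to isomorphism) as an iterated gluing
of `k` star trees. -/
theorem tree_is_iterated_star_gluing {V : Type*} [Fintype V] (G : SimpleGraph V)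
    (hG : G.IsTree) (hcard : 2 < Fintype.card V)
    (hk : Set.ncard {v | ¬ IsLeaf G v} = k)
    (hdeg : ∀ v, ¬ IsLeaf G v → 2 < (G.neighborSet v).ncard) :
    ∃ (W : Type) (H : SimpleGraph W) (L : List ℕ),
      Nonempty (G ≃g H) ∧ StarGluing H L ∧ L.length = k := by
  subst hk
  set n := Fintype.card V with hn
  set e : V ≃ Fin n := Fintype.equivFin V with he
  set G0 : SimpleGraph (Fin n) := SimpleGraph.comap (e.symm) G with hG0
  have φ0 : G ≃g G0 := ⟨e, by intro a b; simp [hG0, SimpleGraph.comap_adj]⟩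
  have hG0tree : G0.IsTree := isTree_map φ0 hG
  have hG0card : 2 < Fintype.card (Fin n) := by simpa using hcard
  have hG0deg : ∀ w, ¬ IsLeaf G0 w → 2 < (G0.neighborSet w).ncard := by
    intro w hw
    have hww : φ0 (φ0.symm w) = w := by simp
    rw [← hww] at hw ⊢
    rw [neighborSet_map_ncard φ0]
    rw [← isLeaf_map φ0] at hw
    exact hdeg _ hw
  obtain ⟨W, H, L, ⟨φ⟩, hSG, hlen⟩ :=
    glue_aux (Fintype.card (Fin n)) (Fin n) G0 le_rfl hG0tree hG0card hG0deg
  refine ⟨W, H, L, ⟨φ0.trans φ⟩, hSG, ?_⟩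
  rw [hlen, internal_set_map φ0, Set.ncard_image_of_injective _ (RelIso.injective φ0)]
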